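/- Let r be a natural number, P := Fin r → ℤ (a free abelian group of rank r), and let w₊, w₋ : P ≃ₗ[ℤ] P be ℤ-linear automorphisms of P. For a group homomorphism u from the additive group P to the multiplicative group ℂˣ, the following are equivalent: (a) there exists a group homomorphism t : P → ℂˣ such that u(λ) = t(w₋ λ) · (t(w₊ λ))⁻¹ for all λ ∈ P; (b) u(μ) = 1 for every μ ∈ P with w₊ μ = w₋ μ. -/

import Mathlib

/-- Every unit of `ℂ` has `m`-th roots for any nonzero integer `m`. -/
lemma units_complex_exists_zpow_eq (c : ℂˣ) {m : ℤ} (hm : m ≠ 0) : ∃ z : ℂˣ, z ^ m = c := by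
  have hn : 0 < m.natAbs := Int.natAbs_pos.mpr hm
  obtain ⟨x, hx⟩ := IsAlgClosed.exists_pow_nat_eq (c : ℂ) hn
  have hx0 : x ≠ 0 := by
    intro h
    rw [h, zero_pow hn.ne'] at hx
    exact (Units.ne_zero c) hx.symm
  refine ⟨if 0 ≤ m then Units.mk0 x hx0 else (Units.mk0 x hx0)⁻¹, ?_⟩
  have key : (Units.mk0 x hx0) ^ (m.natAbs : ℤ) = c := by
    rw [zpow_natCast]
    ext
    simpa using hx
  rcases le_or_gt 0 m with h | h
  · rw [if_pos h, ← key]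
    congr 1
    omega
  · rw [if_neg (not_le.mpr h), inv_zpow, ← zpow_neg, ← key]
    congr 1
    omega

/-- An `ℤ`-linear map into a divisible group (here `Additive ℂˣ`) that kills the kernel of an
endomorphism `f` of `ℤ^r` factors through `f`. -/
lemma factor_through (r : ℕ) (f : (Fin r → ℤ) →ₗ[ℤ] (Fin r → ℤ))
    (U : (Fin r → ℤ) →ₗ[ℤ] (Additive ℂˣ)) (hU : ∀ μ, f μ = 0 → U μ = 0) :
    ∃ T : (Fin r → ℤ) →ₗ[ℤ] (Additive ℂˣ), ∀ lam, T (f lam) = U lam := by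
  classical
  set N := LinearMap.range f with hN
  obtain ⟨n, snf⟩ := N.smithNormalForm (Pi.basisFun ℤ (Fin r))
  -- the diagonal entries are nonzero
  have ha : ∀ j : Fin n, snf.a j ≠ 0 := by
    intro j h
    apply snf.bN.ne_zero j
    have := snf.snf j
    rw [h, zero_smul] at this
    exact Subtype.ext this
  -- preimages of the basis vectors of N
  have hpre : ∀ j : Fin n, ∃ lam, f lam = (snf.bN j : Fin r → ℤ) := fun j =>
    (snf.bN j).2
  choose lam hlam using hpre
  -- divided values
  have hdiv : ∀ j : Fin n, ∃ v : Additive ℂˣ, snf.a j • v = U (lam j) := by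
    intro j
    obtain ⟨z, hz⟩ := units_complex_exists_zpow_eq (Additive.toMul (U (lam j))) (ha j)
    exact ⟨Additive.ofMul z, by rw [← ofMul_zpow, hz]; simp⟩
  choose w hw using hdiv
  set g : Fin r → Additive ℂˣ := fun i => if h : ∃ j, snf.f j = i then w h.choose else 0
    with hg
  have hgemb : ∀ j : Fin n, g (snf.f j) = w j := by
    intro j
    have h : ∃ j', snf.f j' = snf.f j := ⟨j, rfl⟩
    have : h.choose = j := snf.f.injective h.choose_spec
    rw [hg]
    simp only [dif_pos h, this]
  refine ⟨snf.bM.constr ℤ g, fun l => ?_⟩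
  -- the coordinates of f l w.r.t. bN
  set m : N := ⟨f l, LinearMap.mem_range_self f l⟩ with hm
  set c : Fin n → ℤ := fun j => snf.bN.repr m j with hc
  set μ : Fin r → ℤ := ∑ j : Fin n, c j • lam j with hμ
  have hfμ : f μ = f l := by
    have : (∑ j : Fin n, c j • snf.bN j : N) = m := by
      rw [hc]
      exact_mod_cast snf.bN.sum_repr m
    calc f μ = ∑ j : Fin n, c j • f (lam j) := by
          rw [hμ, map_sum]
          exact Finset.sum_congr rfl fun j _ => map_smul f _ _
      _ = ((∑ j : Fin n, c j • snf.bN j : N) : Fin r → ℤ) := by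
          push_cast
          simp [hlam]
      _ = f l := by rw [this]
  have hUl : U l = ∑ j : Fin n, c j • U (lam j) := by
    have h0 : U (l - μ) = 0 := hU _ (by rw [map_sub, hfμ, sub_self])
    have heq : U l = U μ := by
      have h1 := map_sub U l μ
      rw [h0] at h1
      exact sub_eq_zero.mp h1.symm
    rw [heq, hμ, map_sum]
    exact Finset.sum_congr rfl fun j _ => map_smul U _ _
  -- compute T (f l)
  have hTm : (snf.bM.constr ℤ g) (f l) = ∑ j : Fin n, (snf.a j * c j) • w j := by
    rw [Module.Basis.constr_apply_fintype]
    have hzero : ∀ i ∈ Finset.univ, i ∉ Finset.univ.image snf.f →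
        (snf.bM.equivFun (f l) i) • g i = 0 := by
      intro i _ hi
      have : i ∉ Set.range snf.f := by
        simp only [Finset.mem_image, Finset.mem_univ, true_and] at hi
        rintro ⟨j, rfl⟩; exact hi ⟨j, rfl⟩
      have := snf.repr_eq_zero_of_notMem_range m this
      rw [Module.Basis.equivFun_apply]
      rw [hm] at this
      simp only at this
      rw [this, zero_smul]
    rw [← Finset.sum_subset (Finset.subset_univ (Finset.univ.image snf.f)) hzero]
    rw [Finset.sum_image (fun a _ b _ h => snf.f.injective h)]
    apply Finset.sum_congr rfl
    intro j _
    rw [hgemb, Module.Basis.equivFun_apply]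
    have := snf.repr_apply_embedding_eq_repr_smul (m := m) (i := j)
    rw [hm] at this
    simp only at this
    rw [this]
    congr 1
    rw [map_smul]
    simp [hc, hm, mul_comm]
  rw [hTm, hUl]
  apply Finset.sum_congr rfl
  intro j _
  rw [← hw j, smul_smul, mul_comm]

/-- Let `P = Fin r → ℤ` and `w₊, w₋` be `ℤ`-linear automorphisms of `P`.  For a group
homomorphism `u` from the additive group `P` to `ℂˣ`, the following are equivalent:
(a) there is a group homomorphism `t : P → ℂˣ` with `u λ = t (w₋ λ) * (t (w₊ λ))⁻¹` for all
`λ ∈ P`;  (b) `u μ = 1` for every `μ` with `w₊ μ = w₋ μ`. -/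
theorem torus_Tw_characterization (r : ℕ)
    (wp wm : (Fin r → ℤ) ≃ₗ[ℤ] (Fin r → ℤ))
    (u : (Fin r → ℤ) → ℂˣ) (hu : ∀ x y, u (x + y) = u x * u y) :
    (∃ t : (Fin r → ℤ) → ℂˣ, (∀ x y, t (x + y) = t x * t y) ∧
      ∀ lam : Fin r → ℤ, u lam = t (wm lam) * (t (wp lam))⁻¹) ↔
    (∀ mu : Fin r → ℤ, wp mu = wm mu → u mu = 1) := by
  constructor
  · rintro ⟨t, _, hrel⟩ mu hmu
    rw [hrel mu, hmu, mul_inv_cancel]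
  · intro hb
    set f : (Fin r → ℤ) →ₗ[ℤ] (Fin r → ℤ) := wm.toLinearMap - wp.toLinearMap with hf
    set U : (Fin r → ℤ) →ₗ[ℤ] (Additive ℂˣ) :=
      (AddMonoidHom.mk' (fun x => Additive.ofMul (u x)) hu).toIntLinearMap with hU
    have hker : ∀ μ, f μ = 0 → U μ = 0 := by
      intro μ hμ
      have : wp μ = wm μ := by
        have : wm μ - wp μ = 0 := hμ
        rw [sub_eq_zero] at this
        exact this.symm
      have h1 : u μ = 1 := hb μ this
      show Additive.ofMul (u μ) = 0
      rw [h1]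
      rfl
    obtain ⟨T, hT⟩ := factor_through r f U hker
    refine ⟨fun x => Additive.toMul (T x), fun x y => ?_, fun l => ?_⟩
    · show Additive.toMul (T (x + y)) = _
      rw [map_add]
      rfl
    · have h1 : T (f l) = U l := hT l
      have h2 : f l = wm l - wp l := rfl
      rw [h2, map_sub] at h1
      have := congrArg Additive.toMul h1
      rw [toMul_sub] at this
      calc u l = Additive.toMul (U l) := rfl
        _ = Additive.toMul (T (wm l)) * (Additive.toMul (T (wp l)))⁻¹ := by
            rw [← this]; rfl
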